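/- For all real numbers x and y with x ≥ 0 and erfi(x) = y, one has x ≤ 1 + √(log(y + 1)). (Equivalently, erfi⁻¹(y) ≤ 1 + √(log(y + 1)) for every y ≥ 0.) -/

import Mathlib

/-- The imaginary error function, `erfi x = ∫ u in 0..x, exp (u²)`
(the conventional erfi scaled by `√π / 2`). -/
noncomputable def erfi (x : ℝ) : ℝ := ∫ u in (0:ℝ)..x, Real.exp (u ^ 2)

theorem erfi_inv_le (x y : ℝ) (hx : 0 ≤ x) (hxy : erfi x = y) :
    x ≤ 1 + Real.sqrt (Real.log (y + 1)) := by
  rcases le_or_gt x 1 with hx1 | hx1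
  · have := Real.sqrt_nonneg (Real.log (y + 1))
    linarith
  -- x > 1
  have hcont : Continuous fun u : ℝ => Real.exp (u ^ 2) := by continuity
  have hcont2 : Continuous fun u : ℝ => 2 * (u - 1) * Real.exp ((u - 1) ^ 2) := by
    continuity
  have hint1 : IntervalIntegrable (fun u : ℝ => Real.exp (u ^ 2)) MeasureTheory.volume 0 1 :=
    hcont.intervalIntegrable _ _
  have hint2 : IntervalIntegrable (fun u : ℝ => Real.exp (u ^ 2)) MeasureTheory.volume 1 x :=
    hcont.intervalIntegrable _ _
  have hint3 : IntervalIntegrable (fun u : ℝ => 2 * (u - 1) * Real.exp ((u - 1) ^ 2))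
      MeasureTheory.volume 1 x := hcont2.intervalIntegrable _ _
  -- split the integral
  have hsplit : erfi x = (∫ u in (0:ℝ)..1, Real.exp (u ^ 2))
      + ∫ u in (1:ℝ)..x, Real.exp (u ^ 2) := by
    rw [erfi, ← intervalIntegral.integral_add_adjacent_intervals hint1 hint2]
  have h01 : 0 ≤ ∫ u in (0:ℝ)..1, Real.exp (u ^ 2) := by
    apply intervalIntegral.integral_nonneg (by norm_num)
    intro u _
    positivity
  -- FTC: ∫ 1..x, 2(u-1)exp((u-1)^2) = exp((x-1)^2) - 1
  have hderiv : ∀ u ∈ Set.uIcc (1:ℝ) x,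
      HasDerivAt (fun t : ℝ => Real.exp ((t - 1) ^ 2))
        (2 * (u - 1) * Real.exp ((u - 1) ^ 2)) u := by
    intro u _
    have h1 : HasDerivAt (fun t : ℝ => (t - 1) ^ 2) (2 * (u - 1)) u := by
      have := ((hasDerivAt_id u).sub_const 1).pow 2
      simpa [mul_comm, Pi.pow_def] using this
    have := (Real.hasDerivAt_exp ((u - 1) ^ 2)).comp u h1
    simpa [mul_comm, Function.comp_def] using this
  have hftc : ∫ u in (1:ℝ)..x, 2 * (u - 1) * Real.exp ((u - 1) ^ 2)
      = Real.exp ((x - 1) ^ 2) - 1 := by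
    rw [intervalIntegral.integral_eq_sub_of_hasDerivAt hderiv hint3]
    norm_num
  -- pointwise bound on [1, x]
  have hpt : ∀ u ∈ Set.Icc (1:ℝ) x,
      2 * (u - 1) * Real.exp ((u - 1) ^ 2) ≤ Real.exp (u ^ 2) := by
    intro u hu
    have h1 : (1:ℝ) ≤ u := hu.1
    have key : u ^ 2 = (2 * u - 1) + (u - 1) ^ 2 := by ring
    rw [key, Real.exp_add]
    have h2 : 2 * (u - 1) ≤ Real.exp (2 * u - 1) := by
      have := Real.add_one_le_exp (2 * u - 1)
      linarith
    have h3 : 0 < Real.exp ((u - 1) ^ 2) := Real.exp_pos _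
    nlinarith
  have hmono : ∫ u in (1:ℝ)..x, 2 * (u - 1) * Real.exp ((u - 1) ^ 2)
      ≤ ∫ u in (1:ℝ)..x, Real.exp (u ^ 2) :=
    intervalIntegral.integral_mono_on hx1.le hint3 hint2 hpt
  have hy : Real.exp ((x - 1) ^ 2) - 1 ≤ y := by
    rw [← hxy, hsplit]
    rw [hftc] at hmono
    linarith
  have hy1 : Real.exp ((x - 1) ^ 2) ≤ y + 1 := by linarith
  have hlog : (x - 1) ^ 2 ≤ Real.log (y + 1) := by
    rw [Real.le_log_iff_exp_le (by have := Real.exp_pos ((x - 1) ^ 2); linarith : (0:ℝ) < y + 1)]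
    exact hy1
  have hsq : x - 1 ≤ Real.sqrt (Real.log (y + 1)) := by
    rw [show x - 1 = Real.sqrt ((x - 1) ^ 2) by
      rw [Real.sqrt_sq (by linarith)]]
    exact Real.sqrt_le_sqrt hlog
  linarith
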